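/- Let 𝕂 be a symmetric n×n real matrix having at least one strictly negative eigenvalue, and let D be a diagonal n×n matrix with strictly positive diagonal entries. Then the largest singular value of I − D𝕂 is strictly greater than 1. -/

import Mathlib

open Matrix

/-- **A negative kernel eigenvalue forces a large singular value of `I − D𝕂`.**
If `𝕂` is symmetric with a strictly negative eigenvalue and `D` is diagonal with
strictly positive diagonal entries, then the largest singular value (operator norm)
of `I − D𝕂` is strictly greater than one. -/
theorem negative_kernel_eigenvalue_singular_value_gt_one
    {n : ℕ} (𝕂 : Matrix (Fin n) (Fin n) ℝ) (hsymm : 𝕂.IsSymm)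
    (hneg : ∃ (μ : ℝ) (v : Fin n → ℝ), μ < 0 ∧ v ≠ 0 ∧ 𝕂.mulVec v = μ • v)
    (d : Fin n → ℝ) (hd : ∀ i, 0 < d i) :
    1 < ‖Matrix.toEuclideanCLM (𝕜 := ℝ) (n := Fin n)
        ((1 : Matrix (Fin n) (Fin n) ℝ) - Matrix.diagonal d * 𝕂)‖ := by
  obtain ⟨μ, v, hμ, hv, hvec⟩ := hneg
  set s : Fin n → ℝ := fun i => Real.sqrt (d i) with hs
  have hspos : ∀ i, 0 < s i := fun i => Real.sqrt_pos.mpr (hd i)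
  have hss : ∀ i, s i * s i = d i := fun i => Real.mul_self_sqrt (hd i).le
  set S : Matrix (Fin n) (Fin n) ℝ := Matrix.diagonal s with hS
  have hSsymm : Sᴴ = S := by
    simp [hS, diagonal_conjTranspose]
  have hSS : S * S = Matrix.diagonal d := by
    rw [hS, diagonal_mul_diagonal]
    exact congrArg _ (funext hss)
  set A : Matrix (Fin n) (Fin n) ℝ := S * 𝕂 * S with hA
  have hKH : 𝕂ᴴ = 𝕂 := by
    simpa [conjTranspose_eq_transpose_of_trivial] using hsymm.eq
  have hAsymm : A.IsHermitian := by
    show Aᴴ = A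
    rw [hA, conjTranspose_mul, conjTranspose_mul, hSsymm, hKH, Matrix.mul_assoc]
  -- quadratic form of A is negative at w = v / s
  set w : Fin n → ℝ := fun i => v i / s i with hw
  have hSw : S.mulVec w = v := by
    funext i
    simp [hS, hw, mulVec_diagonal, mul_div_cancel₀ _ (hspos i).ne']
  have hterm : ∀ i, w i * (μ * (s i * v i)) = μ * (v i * v i) := by
    intro i
    rw [hw]
    field_simp [(hspos i).ne']
  have hquad : star w ⬝ᵥ A.mulVec w < 0 := by
    have hAw : A.mulVec w = μ • S.mulVec v := by
      rw [hA, ← mulVec_mulVec, ← mulVec_mulVec, hSw, hvec, mulVec_smul]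
    rw [hAw]
    have heq : star w ⬝ᵥ (μ • S.mulVec v) = μ * ∑ i, v i * v i := by
      simp only [dotProduct, Pi.smul_apply, smul_eq_mul, Finset.mul_sum, star_trivial,
        hS, mulVec_diagonal]
      exact Finset.sum_congr rfl fun i _ => hterm i
    rw [heq]
    have hpos : 0 < ∑ i, v i * v i := by
      obtain ⟨j, hj⟩ := Function.ne_iff.mp hv
      exact Finset.sum_pos' (fun i _ => mul_self_nonneg _)
        ⟨j, Finset.mem_univ _, mul_self_pos.mpr hj⟩
    exact mul_neg_of_neg_of_pos hμ hpos
  -- hence some eigenvalue of A is negative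
  have hex : ∃ i, hAsymm.eigenvalues i < 0 := by
    by_contra h
    push_neg at h
    exact absurd ((hAsymm.posSemidef_iff_eigenvalues_nonneg.mpr h).dotProduct_mulVec_nonneg w) (not_le.mpr hquad)
  obtain ⟨i, hlt⟩ := hex
  set lam := hAsymm.eigenvalues i with hlam
  set u : Fin n → ℝ := ⇑(hAsymm.eigenvectorBasis i) with hu
  have hu0 : u ≠ 0 := by
    have := (hAsymm.eigenvectorBasis).orthonormal.ne_zero i
    intro h
    apply this
    ext j
    exact congrFun h j
  have hAu : A.mulVec u = lam • u := hAsymm.mulVec_eigenvectorBasis i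
  -- eigenvector of D𝕂
  set x : Fin n → ℝ := S.mulVec u with hx
  have hx0 : x ≠ 0 := by
    intro h
    apply hu0
    funext j
    have := congrFun h j
    simp [hx, hS, mulVec_diagonal] at this
    rcases this with h' | h'
    · exact absurd h' (hspos j).ne'
    · exact h'
  have hDK : (Matrix.diagonal d * 𝕂).mulVec x = lam • x := by
    have : Matrix.diagonal d * 𝕂 * S = S * A := by
      rw [hA, ← hSS]
      noncomm_ring
    calc (Matrix.diagonal d * 𝕂).mulVec x
        = (Matrix.diagonal d * 𝕂 * S).mulVec u := by rw [hx, mulVec_mulVec]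
      _ = (S * A).mulVec u := by rw [this]
      _ = S.mulVec (A.mulVec u) := by rw [← mulVec_mulVec]
      _ = lam • S.mulVec u := by rw [hAu, mulVec_smul]
  set M : Matrix (Fin n) (Fin n) ℝ := 1 - Matrix.diagonal d * 𝕂 with hM
  have hMx : M.mulVec x = (1 - lam) • x := by
    rw [hM, sub_mulVec, one_mulVec, hDK, sub_smul, one_smul]
  -- move to EuclideanSpace
  set T := Matrix.toEuclideanCLM (𝕜 := ℝ) (n := Fin n) M with hT
  set y : EuclideanSpace ℝ (Fin n) := (WithLp.equiv 2 (Fin n → ℝ)).symm x with hy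
  have hy0 : ‖y‖ ≠ 0 := by
    simp only [ne_eq, norm_eq_zero]
    intro h
    apply hx0
    have := congrArg (WithLp.equiv 2 (Fin n → ℝ)) h
    simpa [hy] using this
  have hTy : T y = (1 - lam) • y := by
    rw [hT, hy]
    show WithLp.toLp 2 (M *ᵥ x) = _
    rw [hMx]
    rfl
  have hb := T.le_opNorm y
  rw [hTy, norm_smul] at hb
  have h1 : (1:ℝ) < 1 - lam := by linarith
  have : ‖(1 : ℝ) - lam‖ = 1 - lam := abs_of_pos (by linarith)
  rw [this] at hb
  have hyn : 0 < ‖y‖ := lt_of_le_of_ne (norm_nonneg _) (Ne.symm hy0)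
  calc (1:ℝ) < 1 - lam := h1
    _ ≤ ‖T‖ := by
        by_contra hcon
        push_neg at hcon
        nlinarith
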